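/- (Cross-ratio lower bound in the regularized local norm) Let α > 0, η > 0, R > 0, and define Φ(u) := α^{-1} H(u) + η^{-1} I_d for u ∈ Int(K). Suppose K is contained in the closed Euclidean ball of radius R centered at the origin. Let u, v ∈ Int(K) be distinct, let p, q ∈ K, and suppose u = p + s(q − p) and v = p + t(q − p) with 0 < s < t < 1. Then ( ‖u − v‖₂ · ‖p − q‖₂ / ( ‖p − u‖₂ · ‖v − q‖₂ ) )² ≥ ‖u − v‖²_{Φ(u)} / ( 2m α^{-1} + 2 η^{-1} R² ). -/

import Mathlib

open Matrix Real
open scoped BigOperators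

/-- The Hessian of the log-barrier function for the polytope `{x | A x ≤ b}`. -/
noncomputable def logBarrierHessian {m d : ℕ} (A : Matrix (Fin m) (Fin d) ℝ) (b : Fin m → ℝ)
    (x : Fin d → ℝ) : Matrix (Fin d) (Fin d) ℝ :=
  ∑ i, ((b i - A.mulVec x i) ^ 2)⁻¹ • Matrix.vecMulVec (A i) (A i)

/-- The local norm `‖h‖_M = √(hᵀ M h)`. -/
noncomputable def mnorm {d : ℕ} (M : Matrix (Fin d) (Fin d) ℝ) (h : Fin d → ℝ) : ℝ :=
  Real.sqrt (h ⬝ᵥ M.mulVec h)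

/-- The Euclidean (ℓ²) norm on `ℝ^d`. -/
noncomputable def l2norm {d : ℕ} (x : Fin d → ℝ) : ℝ :=
  Real.sqrt (∑ i, x i ^ 2)

lemma sum_mulVec' {m d : ℕ} (M : Fin m → Matrix (Fin d) (Fin d) ℝ) (x : Fin d → ℝ) :
    (∑ i, M i).mulVec x = ∑ i, (M i).mulVec x := by
  funext j
  simp only [Matrix.mulVec, dotProduct, Matrix.sum_apply, Finset.sum_apply, Finset.sum_mul]
  rw [Finset.sum_comm]

lemma dotProduct_sum' {m d : ℕ} (h : Fin d → ℝ) (f : Fin m → (Fin d → ℝ)) :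
    h ⬝ᵥ (∑ i, f i) = ∑ i, h ⬝ᵥ f i := by
  simp only [dotProduct, Finset.sum_apply, Finset.mul_sum]
  rw [Finset.sum_comm]

lemma qf_vecMulVec {d : ℕ} (a x : Fin d → ℝ) :
    x ⬝ᵥ (Matrix.vecMulVec a a).mulVec x = (a ⬝ᵥ x) ^ 2 := by
  simp only [Matrix.vecMulVec, Matrix.mulVec, dotProduct, Matrix.of_apply,
    Finset.mul_sum, Finset.sum_mul, sq]
  rw [Finset.sum_comm]
  apply Finset.sum_congr rfl; intro i _; apply Finset.sum_congr rfl; intro j _; ring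

lemma quadform {m d : ℕ} (A : Matrix (Fin m) (Fin d) ℝ) (b : Fin m → ℝ) (α η : ℝ)
    (x h : Fin d → ℝ) :
    h ⬝ᵥ (α⁻¹ • logBarrierHessian A b x + η⁻¹ • (1 : Matrix (Fin d) (Fin d) ℝ)).mulVec h
      = α⁻¹ * ∑ i, ((b i - A.mulVec x i) ^ 2)⁻¹ * (A i ⬝ᵥ h) ^ 2 + η⁻¹ * ∑ j, h j ^ 2 := by
  rw [Matrix.add_mulVec, dotProduct_add, Matrix.smul_mulVec,
    Matrix.smul_mulVec, dotProduct_smul, dotProduct_smul,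
    Matrix.one_mulVec]
  unfold logBarrierHessian
  rw [sum_mulVec', dotProduct_sum']
  congr 1
  · rw [smul_eq_mul]
    congr 1
    apply Finset.sum_congr rfl
    intro i _
    rw [Matrix.smul_mulVec, dotProduct_smul, smul_eq_mul, qf_vecMulVec]
  · rw [smul_eq_mul]
    congr 1
    simp [dotProduct, sq]

lemma l2norm_eq_norm {d : ℕ} (x : Fin d → ℝ) :
    l2norm x = ‖(WithLp.equiv 2 (Fin d → ℝ)).symm x‖ := by
  rw [EuclideanSpace.norm_eq]
  unfold l2norm
  congr 1
  apply Finset.sum_congr rfl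
  intro i _
  rw [Real.norm_eq_abs, sq_abs]; rfl

lemma l2norm_smul {d : ℕ} (c : ℝ) (x : Fin d → ℝ) : l2norm (c • x) = |c| * l2norm x := by
  rw [l2norm_eq_norm, l2norm_eq_norm]
  have h : (WithLp.equiv 2 (Fin d → ℝ)).symm (c • x)
      = c • (WithLp.equiv 2 (Fin d → ℝ)).symm x := rfl
  rw [h, norm_smul, Real.norm_eq_abs]

lemma l2norm_sq {d : ℕ} (x : Fin d → ℝ) : l2norm x ^ 2 = ∑ i, x i ^ 2 := by
  unfold l2norm
  rw [Real.sq_sqrt]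
  positivity

lemma l2norm_sub_le {d : ℕ} (x y : Fin d → ℝ) : l2norm (x - y) ≤ l2norm x + l2norm y := by
  simp only [l2norm_eq_norm]
  have h : (WithLp.equiv 2 (Fin d → ℝ)).symm (x - y)
      = (WithLp.equiv 2 (Fin d → ℝ)).symm x - (WithLp.equiv 2 (Fin d → ℝ)).symm y := rfl
  rw [h]
  exact norm_sub_le _ _

lemma l2norm_pos {d : ℕ} {x : Fin d → ℝ} (hx : x ≠ 0) : 0 < l2norm x := by
  rw [l2norm_eq_norm]
  rw [norm_pos_iff]
  intro h
  exact hx (by ext i; exact congrArg (fun z => z.ofLp i) h)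

set_option maxHeartbeats 1000000

/-- **Cross-ratio lower bound in the regularized local norm.** For
`Φ(u) := α⁻¹ H(u) + η⁻¹ I_d`, and `K` contained in the closed ball of radius `R` about `0`,
for distinct `u, v ∈ Int K` on a chord `[p,q] ⊆ K` in the order `p, u, v, q`,
`(‖u-v‖₂ ‖p-q‖₂ / (‖p-u‖₂ ‖v-q‖₂))² ≥ ‖u-v‖²_{Φ(u)} / (2 m α⁻¹ + 2 η⁻¹ R²)`. -/
theorem stmt11 {m d : ℕ} (A : Matrix (Fin m) (Fin d) ℝ) (b : Fin m → ℝ)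
    (α η R : ℝ) (hα : 0 < α) (hη : 0 < η) (hR : 0 < R)
    (hK : ∀ x : Fin d → ℝ, (∀ i, A.mulVec x i ≤ b i) → l2norm x ≤ R)
    (u v p q : Fin d → ℝ) (huv : u ≠ v)
    (hu : ∀ i, A.mulVec u i < b i) (hv : ∀ i, A.mulVec v i < b i)
    (hp : ∀ i, A.mulVec p i ≤ b i) (hq : ∀ i, A.mulVec q i ≤ b i)
    (s t : ℝ) (hs : 0 < s) (hst : s < t) (ht : t < 1)
    (hus : u = p + s • (q - p)) (hvt : v = p + t • (q - p)) :
    mnorm (α⁻¹ • logBarrierHessian A b u + η⁻¹ • (1 : Matrix (Fin d) (Fin d) ℝ)) (u - v) ^ 2 /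
        (2 * m * α⁻¹ + 2 * η⁻¹ * R ^ 2) ≤
      (l2norm (u - v) * l2norm (p - q) / (l2norm (p - u) * l2norm (v - q))) ^ 2 := by
  set w : Fin d → ℝ := q - p with hw
  have huvw : u - v = (s - t) • w := by
    rw [hus, hvt]; ext j; simp [hw]; try ring
  have hpu : p - u = (-s) • w := by
    rw [hus]; ext j; simp [hw]; try ring
  have hvq : v - q = (t - 1) • w := by
    rw [hvt]; ext j; simp [hw]; try ring
  have hwne : w ≠ 0 := fun h0 => huv (sub_eq_zero.mp (by rw [huvw, h0, smul_zero]))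
  have hL : 0 < l2norm w := l2norm_pos hwne
  set L := l2norm w with hLdef
  -- Euclidean norms of the segments
  have e1 : l2norm (u - v) = (t - s) * L := by
    rw [huvw, l2norm_smul, abs_of_nonpos (by linarith)]; ring_nf; rfl
  have e2 : l2norm (p - q) = L := by
    have h : p - q = (-1 : ℝ) • w := by ext j; simp [hw]
    rw [h, l2norm_smul]; simp; rfl
  have e3 : l2norm (p - u) = s * L := by
    rw [hpu, l2norm_smul, abs_of_nonpos (by linarith)]; ring_nf; rfl
  have e4 : l2norm (v - q) = (1 - t) * L := by
    rw [hvq, l2norm_smul, abs_of_nonpos (by linarith)]; ring_nf; rfl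
  -- slack of u as convex combination
  have hsu : ∀ i, b i - A.mulVec u i
      = (1 - s) * (b i - A.mulVec p i) + s * (b i - A.mulVec q i) := by
    intro i
    rw [hus, Matrix.mulVec_add, Matrix.mulVec_smul, Matrix.mulVec_sub]
    simp only [Pi.add_apply, Pi.smul_apply, Pi.sub_apply, smul_eq_mul]
    ring
  have haw : ∀ i, A i ⬝ᵥ w = (b i - A.mulVec p i) - (b i - A.mulVec q i) := by
    intro i
    have h : A i ⬝ᵥ w = A.mulVec q i - A.mulVec p i := by
      show A i ⬝ᵥ (q - p) = _
      rw [dotProduct_sub]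
      rfl
    rw [h]; ring
  -- main scalar inequality per constraint
  have key : ∀ i, s ^ 2 * (1 - t) ^ 2 * (((b i - A.mulVec u i) ^ 2)⁻¹ * (A i ⬝ᵥ w) ^ 2) ≤ 1 := by
    intro i
    have hsp0 : 0 ≤ b i - A.mulVec p i := by linarith [hp i]
    have hsq0 : 0 ≤ b i - A.mulVec q i := by linarith [hq i]
    have hsu0 : 0 < b i - A.mulVec u i := by linarith [hu i]
    set sp := b i - A.mulVec p i
    set sq' := b i - A.mulVec q i
    have h1 : s * (1 - t) * |sp - sq'| ≤ b i - A.mulVec u i := by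
      rw [hsu i]
      have habs : |sp - sq'| ≤ sp + sq' := by
        rw [abs_sub_le_iff]; constructor <;> linarith
      have hfac1 : s * (1 - t) ≤ 1 - s := by nlinarith
      have hfac2 : s * (1 - t) ≤ s := by nlinarith
      calc s * (1 - t) * |sp - sq'| ≤ s * (1 - t) * (sp + sq') := by
            apply mul_le_mul_of_nonneg_left habs; nlinarith
        _ = s * (1 - t) * sp + s * (1 - t) * sq' := by ring
        _ ≤ (1 - s) * sp + s * sq' := by
            gcongr <;> assumption
    have h3 : s ^ 2 * (1 - t) ^ 2 * (sp - sq') ^ 2 ≤ (b i - A.mulVec u i) ^ 2 := by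
      have h2 := mul_self_le_mul_self (mul_nonneg (mul_nonneg hs.le (by linarith)) (abs_nonneg _)) h1
      calc s ^ 2 * (1 - t) ^ 2 * (sp - sq') ^ 2
          = (s * (1 - t) * |sp - sq'|) * (s * (1 - t) * |sp - sq'|) := by
            rw [show (s * (1 - t) * |sp - sq'|) * (s * (1 - t) * |sp - sq'|)
                = s ^ 2 * (1 - t) ^ 2 * (|sp - sq'| * |sp - sq'|) by ring,
              abs_mul_abs_self]
            ring
        _ ≤ (b i - A.mulVec u i) * (b i - A.mulVec u i) := h2
        _ = (b i - A.mulVec u i) ^ 2 := by ring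
    rw [haw i]
    rw [show s ^ 2 * (1 - t) ^ 2 * ((((b i - A.mulVec u i)) ^ 2)⁻¹ * (sp - sq') ^ 2)
        = (s ^ 2 * (1 - t) ^ 2 * (sp - sq') ^ 2) / (b i - A.mulVec u i) ^ 2 by ring]
    rw [div_le_one (pow_pos hsu0 2)]
    exact h3
  -- quadratic form value
  have hdot : ∀ i, A i ⬝ᵥ (u - v) = (s - t) * (A i ⬝ᵥ w) := by
    intro i
    rw [huvw, dotProduct_smul, smul_eq_mul]
  set SA := ∑ i, ((b i - A.mulVec u i) ^ 2)⁻¹ * (A i ⬝ᵥ w) ^ 2 with hSAdef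
  set SW := ∑ j, w j ^ 2 with hSWdef
  have hSA0 : 0 ≤ SA := Finset.sum_nonneg fun i _ => by positivity
  have hSW0 : 0 ≤ SW := Finset.sum_nonneg fun j _ => by positivity
  have hval : (u - v) ⬝ᵥ (α⁻¹ • logBarrierHessian A b u
        + η⁻¹ • (1 : Matrix (Fin d) (Fin d) ℝ)).mulVec (u - v)
      = (t - s) ^ 2 * (α⁻¹ * SA + η⁻¹ * SW) := by
    rw [quadform]
    have h1 : ∑ i, ((b i - A.mulVec u i) ^ 2)⁻¹ * (A i ⬝ᵥ (u - v)) ^ 2 = (t - s) ^ 2 * SA := by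
      rw [hSAdef, Finset.mul_sum]
      apply Finset.sum_congr rfl
      intro i _
      rw [hdot i]; ring
    have h2 : ∑ j, (u - v) j ^ 2 = (t - s) ^ 2 * SW := by
      rw [hSWdef, Finset.mul_sum]
      apply Finset.sum_congr rfl
      intro j _
      rw [huvw]
      simp only [Pi.smul_apply, smul_eq_mul]
      ring
    rw [h1, h2]; ring
  have hmn : mnorm (α⁻¹ • logBarrierHessian A b u
        + η⁻¹ • (1 : Matrix (Fin d) (Fin d) ℝ)) (u - v) ^ 2
      = (t - s) ^ 2 * (α⁻¹ * SA + η⁻¹ * SW) := by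
    unfold mnorm
    rw [Real.sq_sqrt (by rw [hval]; positivity)]
    exact hval
  -- bounds: s²(1-t)² SA ≤ m  and  s²(1-t)² SW ≤ 2R²
  have hSAle : s ^ 2 * (1 - t) ^ 2 * SA ≤ (m : ℝ) := by
    rw [hSAdef, Finset.mul_sum]
    calc ∑ i, s ^ 2 * (1 - t) ^ 2 * (((b i - A.mulVec u i) ^ 2)⁻¹ * (A i ⬝ᵥ w) ^ 2)
        ≤ ∑ _i : Fin m, (1 : ℝ) := Finset.sum_le_sum fun i _ => key i
      _ = (m : ℝ) := by simp
  have hLle : L ≤ 2 * R := by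
    have := l2norm_sub_le q p
    have hq' := hK q hq
    have hp' := hK p hp
    rw [hLdef]
    calc l2norm w = l2norm (q - p) := rfl
      _ ≤ l2norm q + l2norm p := l2norm_sub_le q p
      _ ≤ 2 * R := by linarith
  have hSWle : s ^ 2 * (1 - t) ^ 2 * SW ≤ 2 * R ^ 2 := by
    have hSWL : SW = L ^ 2 := by rw [hSWdef, hLdef, l2norm_sq]
    rw [hSWL]
    have hL2 : L ^ 2 ≤ 4 * R ^ 2 := by nlinarith [hLle, hL.le]
    have hx0 : (0:ℝ) ≤ s * (1 - t) := by nlinarith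
    have h14 : s * (1 - t) ≤ 1 / 4 := by nlinarith [sq_nonneg (t - 1/2)]
    have hst2 : s ^ 2 * (1 - t) ^ 2 ≤ 1 / 2 := by nlinarith [mul_self_le_mul_self hx0 h14]
    nlinarith [mul_le_mul hst2 hL2 (by positivity : (0:ℝ) ≤ L ^ 2) (by norm_num : (0:ℝ) ≤ 1/2)]
  have hmain : s ^ 2 * (1 - t) ^ 2 * (α⁻¹ * SA + η⁻¹ * SW)
      ≤ 2 * m * α⁻¹ + 2 * η⁻¹ * R ^ 2 := by
    have hαi : 0 < α⁻¹ := by positivity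
    have hηi : 0 < η⁻¹ := by positivity
    have hmle : (m:ℝ) * α⁻¹ ≤ 2 * m * α⁻¹ := by nlinarith [Nat.cast_nonneg (α := ℝ) m]
    calc s ^ 2 * (1 - t) ^ 2 * (α⁻¹ * SA + η⁻¹ * SW)
        = α⁻¹ * (s ^ 2 * (1 - t) ^ 2 * SA) + η⁻¹ * (s ^ 2 * (1 - t) ^ 2 * SW) := by ring
      _ ≤ α⁻¹ * m + η⁻¹ * (2 * R ^ 2) := by
          gcongr
      _ ≤ 2 * m * α⁻¹ + 2 * η⁻¹ * R ^ 2 := by nlinarith [Nat.cast_nonneg (α := ℝ) m]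
  -- finish
  rw [hmn, e1, e2, e3, e4]
  have hLne : L ≠ 0 := hL.ne'
  have hsne : s ≠ 0 := hs.ne'
  have htne : (1 : ℝ) - t ≠ 0 := by intro h; linarith
  have hfrac : (t - s) * L * L / (s * L * ((1 - t) * L)) = (t - s) / (s * (1 - t)) := by
    rw [div_eq_div_iff (by intro h; rcases mul_eq_zero.mp h with h'|h' <;> simp_all) (by intro h; rcases mul_eq_zero.mp h with h'|h' <;> simp_all)]
    ring
  rw [hfrac]
  have hD : 0 < 2 * (m:ℝ) * α⁻¹ + 2 * η⁻¹ * R ^ 2 := by positivity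
  rw [div_pow, div_le_div_iff₀ hD (pow_pos (mul_pos hs (by linarith : (0:ℝ) < 1 - t)) 2)]
  have := mul_le_mul_of_nonneg_left hmain (sq_nonneg (t - s))
  nlinarith [this]
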